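/- arXiv:1803.02050 — 5 statements merged into one kernel-verified Lean document; each statement's English description precedes it below -/
import Mathlib

section
/- Let A be a 2-torsion-free ring, M an A-bimodule, and δ : A → M a Jordan derivation. Then for all a, b ∈ A, δ(aba) = δ(a)ba + aδ(b)a + abδ(a). -/
open MulOpposite in
/-- Let `A` be a 2-torsion-free ring, `M` an `A`-bimodule and `δ : A → M` a Jordan
derivation.  Then `δ(aba) = δ(a)ba + aδ(b)a + abδ(a)` for all `a, b ∈ A`. -/
theorem jordan_derivation_apply_mul_mul
    {A M : Type*} [Ring A] [AddCommGroup M] [Module A M] [Module Aᵐᵒᵖ M]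
    [SMulCommClass A Aᵐᵒᵖ M]
    (htf : ∀ m : M, 2 • m = 0 → m = 0)
    (htfA : ∀ a : A, 2 * a = 0 → a = 0)
    (δ : A →+ M) (hδ : ∀ a : A, δ (a * a) = op a • δ a + a • δ a) :
    ∀ a b : A, δ (a * b * a) = op (b * a) • δ a + a • op a • δ b + (a * b) • δ a := by
  have sc : ∀ (x y : A) (m : M), op x • y • m = y • op x • m := fun x y m =>
    (smul_comm y (op x) m).symm
  have polar : ∀ x y : A, δ (x * y + y * x)
      = x • δ y + op y • δ x + y • δ x + op x • δ y := by
    intro x y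
    have h := hδ (x + y)
    have expand : (x + y) * (x + y) = x * x + (x * y + y * x) + y * y := by
      noncomm_ring
    rw [expand] at h
    simp only [map_add, op_add, add_smul, smul_add, hδ x, hδ y] at h
    rw [map_add]
    linear_combination (norm := abel) h
  intro a b
  have e1 := polar a (a * b + b * a)
  have e2 := polar (a * a) b
  have ering : a * (a * b + b * a) + (a * b + b * a) * a
      = (a * a * b + b * (a * a)) + (a * b * a + a * b * a) := by noncomm_ring
  rw [ering, polar a b] at e1
  have key : δ (a * b * a) + δ (a * b * a)
      = (op (b * a) • δ a + a • op a • δ b + (a * b) • δ a)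
        + (op (b * a) • δ a + a • op a • δ b + (a * b) • δ a) := by
    simp only [map_add, op_mul, op_add, mul_smul, add_smul, smul_add, hδ a, sc]
      at e1 e2 ⊢
    linear_combination (norm := abel) e1 - e2
  have h0 : (2 : ℕ) • (δ (a * b * a)
      - (op (b * a) • δ a + a • op a • δ b + (a * b) • δ a)) = 0 := by
    rw [smul_sub, two_nsmul, two_nsmul, key, sub_self]
  exact sub_eq_zero.mp (htf _ h0)
end

section
/- Every Jordan derivation on a 2-torsion-free prime ring is a derivation. -/
/-- Herstein's theorem: every Jordan derivation on a 2-torsion-free prime ring is a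
derivation. -/
theorem jordan_derivation_of_prime_is_derivation
    {R : Type*} [Ring R]
    (htf : ∀ a : R, 2 * a = 0 → a = 0)
    (hprime : ∀ a b : R, (∀ r : R, a * r * b = 0) → a = 0 ∨ b = 0)
    (δ : R →+ R) (hδ : ∀ a : R, δ (a * a) = δ a * a + a * δ a) :
    ∀ a b : R, δ (a * b) = δ a * b + a * δ b := by
  -- Polarization of the Jordan identity
  have hpol : ∀ a b : R, δ (a*b + b*a) = δ a * b + a * δ b + δ b * a + b * δ a := by
    intro a b
    have h := hδ (a + b)
    rw [show (a+b)*(a+b) = a*a + (a*b + b*a) + b*b by noncomm_ring] at h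
    rw [map_add, map_add, map_add δ a b, hδ a, hδ b] at h
    linear_combination (norm := noncomm_ring) h
  -- δ on aba
  have hB : ∀ a b : R, δ (a*b*a) = δ a * (b*a) + a * (δ b * a) + a*b*δ a := by
    intro a b
    have h1 := hpol a (a*b + b*a)
    rw [show a*(a*b + b*a) + (a*b + b*a)*a = (a*a*b + b*(a*a)) + (a*b*a + a*b*a) by
      noncomm_ring] at h1
    rw [map_add, hpol (a*a) b, map_add, hδ a, hpol a b] at h1
    have h2 : 2 * (δ (a*b*a) - (δ a * (b*a) + a * (δ b * a) + a*b*δ a)) = 0 := by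
      linear_combination (norm := noncomm_ring) h1
    have := htf _ h2
    linear_combination (norm := noncomm_ring) this
  -- δ on uxv + vxu
  have hC : ∀ u x v : R, δ (u*x*v + v*x*u) =
      δ u * (x*v) + u * (δ x * v) + u*x*δ v + δ v * (x*u) + v * (δ x * u) + v*x*δ u := by
    intro u x v
    have h := hB (u+v) x
    rw [show (u+v)*x*(u+v) = u*x*u + (u*x*v + v*x*u) + v*x*v by noncomm_ring] at h
    rw [map_add, map_add, map_add δ u v, hB u x, hB v x] at h
    linear_combination (norm := noncomm_ring) h
  -- the main identity: G x k + k x G = 0 with G = δ(ab)-δa·b-a·δb, k = [a,b]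
  have hmain : ∀ a b x : R,
      (δ (a*b) - δ a * b - a * δ b) * x * (a*b - b*a)
        + (a*b - b*a) * x * (δ (a*b) - δ a * b - a * δ b) = 0 := by
    intro a b x
    have hba : δ (b*a) = δ a * b + a * δ b + δ b * a + b * δ a - δ (a*b) := by
      have h := hpol a b
      rw [map_add] at h
      exact eq_sub_of_add_eq' h
    have e2a := hB a (b*x*b)
    rw [hB b x] at e2a
    have e2b := hB b (a*x*a)
    rw [hB a x] at e2b
    have e1 := hC (a*b) x (b*a)
    rw [show a*b*x*(b*a) + b*a*x*(a*b) = a*(b*x*b)*a + b*(a*x*a)*b by noncomm_ring,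
      map_add, e2a, e2b, hba] at e1
    linear_combination (norm := noncomm_ring) e1
  -- cancellation lemma: uxv + vxu = 0 for all x implies uxv = 0 for all x
  have hL : ∀ u v : R, (∀ x : R, u*x*v + v*x*u = 0) → ∀ x : R, u*x*v = 0 := by
    intro u v h x
    by_cases hv : v = 0
    · simp [hv]
    · have hsym : ∀ y : R, v*y*u = u*y*v := by
        intro y
        have key : ∀ z : R, v*z*(v*y*u - u*y*v) = 0 := by
          intro z
          have h1 := h (z*v*y)
          have h2 := congrArg (· * (y*v)) (h z)
          simp only [add_mul, zero_mul] at h2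
          linear_combination (norm := noncomm_ring) h1 - h2
        rcases hprime v (v*y*u - u*y*v) key with h0 | h0
        · exact absurd h0 hv
        · exact sub_eq_zero.mp h0
      have h4 : 2*(u*x*v) = 0 := by
        linear_combination (norm := noncomm_ring) h x - hsym x
      exact htf _ h4
  -- primeness: for each pair, G = 0 or [a,b] = 0
  have hGK : ∀ a b : R, δ (a*b) - δ a * b - a * δ b = 0 ∨ a*b - b*a = 0 := by
    intro a b
    exact hprime _ _ (hL _ _ (hmain a b))
  -- additivity of G in each variable
  have hGadd : ∀ a b c : R, δ (a*(b+c)) - δ a * (b+c) - a * δ (b+c)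
      = (δ (a*b) - δ a * b - a * δ b) + (δ (a*c) - δ a * c - a * δ c) := by
    intro a b c
    rw [mul_add, map_add, map_add]
    noncomm_ring
  have hGadd' : ∀ a b c : R, δ ((a+c)*b) - δ (a+c) * b - (a+c) * δ b
      = (δ (a*b) - δ a * b - a * δ b) + (δ (c*b) - δ c * b - c * δ b) := by
    intro a b c
    rw [add_mul, map_add, map_add]
    noncomm_ring
  -- conclusion
  intro a b
  by_contra hne
  have hne' : δ (a*b) - δ a * b - a * δ b ≠ 0 := by
    intro h
    rw [sub_sub] at h
    exact hne (sub_eq_zero.mp h)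
  have hk : a*b - b*a = 0 := (hGK a b).resolve_left hne'
  -- a commutes with everything
  have hac : ∀ c : R, a*c - c*a = 0 := by
    intro c
    rcases hGK a (b+c) with h0 | h0
    · have hgc : δ (a*c) - δ a * c - a * δ c ≠ 0 := by
        intro hz
        have h1 := hGadd a b c
        rw [h0, hz, add_zero] at h1
        exact hne' h1.symm
      exact (hGK a c).resolve_left hgc
    · have h1 : (a*b - b*a) + (a*c - c*a) = 0 := by
        linear_combination (norm := noncomm_ring) h0
      rw [hk, zero_add] at h1
      exact h1
  -- b commutes with everything
  have hcb : ∀ c : R, c*b - b*c = 0 := by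
    intro c
    rcases hGK (a+c) b with h0 | h0
    · have hgc : δ (c*b) - δ c * b - c * δ b ≠ 0 := by
        intro hz
        have h1 := hGadd' a b c
        rw [h0, hz, add_zero] at h1
        exact hne' h1.symm
      exact (hGK c b).resolve_left hgc
    · have h1 : (a*b - b*a) + (c*b - b*c) = 0 := by
        linear_combination (norm := noncomm_ring) h0
      rw [hk, zero_add] at h1
      exact h1
  -- contradiction
  have hba' : b*a = a*b := (sub_eq_zero.mp hk).symm
  have hc1 : a*δ b - δ b*a = 0 := hac (δ b)
  have hc2 : δ a*b - b*δ a = 0 := hcb (δ a)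
  have hp := hpol a b
  rw [hba', map_add] at hp
  have h2 : 2*(δ (a*b) - δ a * b - a * δ b) = 0 := by
    linear_combination (norm := noncomm_ring) hp - hc1 - hc2
  exact hne' (htf _ h2)
end

section
/- Every Jordan derivation on a 2-torsion-free semiprime ring is a derivation. -/
/-- Cusack's theorem: every Jordan derivation on a 2-torsion-free semiprime ring is a
derivation. -/
theorem jordan_derivation_of_semiprime_is_derivation
    {R : Type*} [Ring R]
    (htf : ∀ a : R, 2 * a = 0 → a = 0)
    (hsemiprime : ∀ a : R, (∀ r : R, a * r * a = 0) → a = 0)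
    (δ : R →+ R) (hδ : ∀ a : R, δ (a * a) = δ a * a + a * δ a) :
    ∀ a b : R, δ (a * b) = δ a * b + a * δ b := by
  -- linearized Jordan identity
  have jd0 : ∀ a b : R, δ (a*b + b*a) = δ a * b + a * δ b + δ b * a + b * δ a := by
    intro a b
    have e : a*b + b*a = (a+b)*(a+b) - a*a - b*b := by noncomm_ring
    have h := hδ (a+b)
    rw [map_add] at h
    rw [e, map_sub, map_sub, h, hδ, hδ]
    noncomm_ring
  have jd : ∀ a b : R, δ (a*b) + δ (b*a) = δ a * b + a * δ b + δ b * a + b * δ a := by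
    intro a b
    rw [← map_add]; exact jd0 a b
  -- the aba identity
  have L1 : ∀ a b : R, δ (a*b*a) = δ a * (b*a) + a * δ b * a + (a*b) * δ a := by
    intro a b
    have key : δ (a*b*a) + δ (a*b*a)
        = (δ a * (b*a) + a * δ b * a + (a*b) * δ a)
          + (δ a * (b*a) + a * δ b * a + (a*b) * δ a) := by
      have e : a*b*a + a*b*a = (a*(a*b+b*a) + (a*b+b*a)*a) - ((a*a)*b + b*(a*a)) := by
        noncomm_ring
      rw [← map_add, e, map_sub, jd0 a (a*b+b*a), jd0 (a*a) b, jd0 a b, hδ a]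
      noncomm_ring
    have h2 : (2:R) * (δ (a*b*a) - (δ a * (b*a) + a * δ b * a + (a*b) * δ a)) = 0 := by
      linear_combination (norm := noncomm_ring) key
    exact sub_eq_zero.mp (htf _ h2)
  -- the abc + cba identity
  have L2 : ∀ a b c : R, δ (a*b*c + c*b*a)
      = δ a * (b*c) + a * δ b * c + (a*b) * δ c + δ c * (b*a) + c * δ b * a + (c*b) * δ a := by
    intro a b c
    have e : a*b*c + c*b*a = (a+c)*b*(a+c) - a*b*a - c*b*c := by noncomm_ring
    rw [e, map_sub, map_sub, L1, L1, L1, map_add]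
    noncomm_ring
  -- with g = δ(ab) - δ(a)b - aδ(b) and u = ab - ba : g x u + u x g = 0
  have L3 : ∀ a b x : R,
      (δ (a*b) - δ a * b - a * δ b) * x * (a*b - b*a)
      + (a*b - b*a) * x * (δ (a*b) - δ a * b - a * δ b) = 0 := by
    intro a b x
    have h1 := L2 (a*b) x (b*a)
    have e : (a*b)*x*(b*a) + (b*a)*x*(a*b) = a*(b*x*b)*a + b*(a*x*a)*b := by noncomm_ring
    rw [e, map_add, L1 a (b*x*b), L1 b (a*x*a), L1 b x, L1 a x] at h1
    have hba : δ (b*a) = δ a * b + a * δ b + δ b * a + b * δ a - δ (a*b) := by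
      linear_combination (norm := noncomm_ring) jd a b
    rw [hba] at h1
    linear_combination (norm := noncomm_ring) h1
  -- Brešar's lemma: p x q + q x p = 0 for all x implies p x q = 0
  have L4 : ∀ p q : R, (∀ x : R, p*x*q + q*x*p = 0) → ∀ x : R, p*x*q = 0 := by
    intro p q h x
    apply hsemiprime
    intro y
    apply htf
    linear_combination (norm := noncomm_ring)
      (p*x) * (h y) * (x*q) - (h (x*p*y)) * (x*q) + (h x) * (y*(p*x*q))
  have L5 : ∀ a b x : R, (δ (a*b) - δ a * b - a * δ b) * x * (a*b - b*a) = 0 := by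
    intro a b
    exact L4 _ _ (fun x => L3 a b x)
  -- first linearization
  have L7 : ∀ a b c x : R, (δ (a*b) - δ a * b - a * δ b) * x * (c*b - b*c) = 0 := by
    intro a b c x
    have lin : ∀ y : R, (δ (a*b) - δ a * b - a * δ b) * y * (c*b - b*c)
        + (δ (c*b) - δ c * b - c * δ b) * y * (a*b - b*a) = 0 := by
      intro y
      have h1 := L5 (a+c) b y
      have e1 : δ ((a+c)*b) = δ (a*b) + δ (c*b) := by rw [add_mul, map_add]
      have e2 : δ (a+c) = δ a + δ c := map_add δ a c
      rw [e1, e2] at h1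
      linear_combination (norm := noncomm_ring) h1 - L5 a b y - L5 c b y
    apply hsemiprime
    intro y
    linear_combination (norm := noncomm_ring)
      (((δ (a*b) - δ a * b - a * δ b) * x * (c*b - b*c)) * y) * (lin x)
      - L5 a b (x*(c*b - b*c)*y*(δ (c*b) - δ c * b - c * δ b)*x)
  -- second linearization
  have L8 : ∀ a b c d x : R, (δ (a*b) - δ a * b - a * δ b) * x * (c*d - d*c) = 0 := by
    intro a b c d x
    have lin : ∀ y : R, (δ (a*b) - δ a * b - a * δ b) * y * (c*d - d*c)
        + (δ (a*d) - δ a * d - a * δ d) * y * (c*b - b*c) = 0 := by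
      intro y
      have h1 := L7 a (b+d) c y
      have e1 : δ (a*(b+d)) = δ (a*b) + δ (a*d) := by rw [mul_add, map_add]
      have e2 : δ (b+d) = δ b + δ d := map_add δ b d
      rw [e1, e2] at h1
      linear_combination (norm := noncomm_ring) h1 - L7 a b c y - L7 a d c y
    apply hsemiprime
    intro y
    linear_combination (norm := noncomm_ring)
      (((δ (a*b) - δ a * b - a * δ b) * x * (c*d - d*c)) * y) * (lin x)
      - L7 a b c (x*(c*d - d*c)*y*(δ (a*d) - δ a * d - a * δ d)*x)
  -- g is central
  have L9 : ∀ a b d : R,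
      (δ (a*b) - δ a * b - a * δ b) * d = d * (δ (a*b) - δ a * b - a * δ b) := by
    intro a b d
    have key : (δ (a*b) - δ a * b - a * δ b) * d - d * (δ (a*b) - δ a * b - a * δ b) = 0 := by
      apply hsemiprime
      intro y
      linear_combination (norm := noncomm_ring)
        L8 a b (δ (a*b) - δ a * b - a * δ b) d (d*y)
        - d * (L8 a b (δ (a*b) - δ a * b - a * δ b) d y)
    linear_combination (norm := noncomm_ring) key
  -- g annihilates commutators
  have L10 : ∀ a b c d : R, (δ (a*b) - δ a * b - a * δ b) * (c*d - d*c) = 0 := by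
    intro a b c d
    apply hsemiprime
    intro y
    linear_combination (norm := noncomm_ring)
      L8 a b c d ((c*d - d*c) * y * (δ (a*b) - δ a * b - a * δ b))
  -- the δ(x·[a,b]) formula
  have star : ∀ a b x : R, δ (x*(a*b)) - δ (x*(b*a))
      = δ x * (a*b - b*a) + x * (δ (a*b) - δ (b*a))
        + (δ (a*b) - δ a * b - a * δ b) * x - x * (δ (a*b) - δ a * b - a * δ b) := by
    intro a b x
    have h2 := L2 a b x
    rw [map_add, mul_assoc x b a] at h2
    have h1 := jd (a*b) x
    have h0 := jd a b
    linear_combination (norm := noncomm_ring) h1 - h2 + x * h0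
  -- final assembly
  intro a b
  set g : R := δ (a*b) - δ a * b - a * δ b with hg
  have hcent : ∀ d : R, g * d = d * g := fun d => L9 a b d
  have hgu : g * (a*b - b*a) = 0 := L10 a b a b
  have h14 : g*g + g*g = g * (δ (a*b) - δ (b*a)) := by
    have h1 : g * (δ a * b - b * δ a) = 0 := L10 a b (δ a) b
    have h2 : g * (a * δ b - δ b * a) = 0 := L10 a b a (δ b)
    have h0 := jd a b
    linear_combination (norm := noncomm_ring) g*hg + g*hg + g*h0 - h1 - h2
  have hstar : δ (g*(a*b)) - δ (g*(b*a))
      = δ g * (a*b - b*a) + g * (δ (a*b) - δ (b*a)) + g * g - g * g := star a b g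
  have hLHS : δ (g*(a*b)) - δ (g*(b*a)) = 0 := by
    rw [← map_sub, ← mul_sub, hgu, map_zero]
  rw [hLHS] at hstar
  have hcomb : (a*b - b*a) * g = 0 := by
    linear_combination (norm := noncomm_ring) hgu - hcent (a*b) + hcent (b*a)
  have h15 : (g * (δ (a*b) - δ (b*a))) * g = 0 := by
    linear_combination (norm := noncomm_ring) - hstar * g - δ g * hcomb
  have hcube : g*g*g = 0 := by
    apply htf
    linear_combination (norm := noncomm_ring) h14 * g + h15
  have hsq : g*g = 0 := by
    apply hsemiprime
    intro r
    linear_combination (norm := noncomm_ring)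
      g * (hcent r) * (g*g) + (hcent r) * (g*g*g) + (r*g) * hcube
  have hzero : g = 0 := by
    apply hsemiprime
    intro r
    linear_combination (norm := noncomm_ring) (hcent r) * g + r * hsq
  linear_combination (norm := noncomm_ring) hzero - hg
end

section
/- Let A be a 2-torsion-free ring and δ : A → A a Jordan derivation. Then for all a, b ∈ A, δ(ab)·[a,b] + [a,b]·δ(ab) = δ(a)b[a,b] + aδ(b)[a,b] + [a,b]δ(a)b + [a,b]aδ(b), where [a,b] = ab − ba; equivalently, the map (a,b) ↦ δ(ab) − δ(a)b − aδ(b) annihilates commutators in this Jordan sense. -/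
/-- Brešar's key identity: if `δ` is a Jordan derivation on a 2-torsion-free ring `A`,
then `δ(ab)[a,b] + [a,b]δ(ab) = δ(a)b[a,b] + aδ(b)[a,b] + [a,b]δ(a)b + [a,b]aδ(b)`
for all `a, b ∈ A`, where `[a,b] = ab − ba`.  Equivalently, with
`D(a,b) = δ(ab) − δ(a)b − aδ(b)` one has `D(a,b)[a,b] + [a,b]D(a,b) = 0`. -/
theorem jordan_derivation_bresar_identity
    {A : Type*} [Ring A] (htf : ∀ a : A, 2 * a = 0 → a = 0)
    (δ : A →+ A) (hδ : ∀ a : A, δ (a * a) = δ a * a + a * δ a) :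
    ∀ a b : A,
      δ (a * b) * (a * b - b * a) + (a * b - b * a) * δ (a * b) =
        δ a * b * (a * b - b * a) + a * δ b * (a * b - b * a)
          + (a * b - b * a) * (δ a * b) + (a * b - b * a) * (a * δ b) := by
  -- polarization: δ(xy + yx)
  have h1 : ∀ x y : A, δ (x*y + y*x) = δ x * y + x * δ y + δ y * x + y * δ x := by
    intro x y
    have e := hδ (x+y)
    have e2 : δ ((x+y)*(x+y)) = δ (x*x) + δ (x*y + y*x) + δ (y*y) := by
      rw [← map_add, ← map_add]; congr 1; noncomm_ring
    rw [e2, hδ x, hδ y] at e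
    simp only [map_add] at e ⊢
    linear_combination (norm := noncomm_ring) e
  -- δ(xyx), using 2-torsion-freeness
  have h2 : ∀ x y : A, δ (x*y*x) = δ x * (y*x) + x * δ y * x + x*y*δ x := by
    intro x y
    have e1 := h1 x (x*y + y*x)
    have e4 : x*(x*y + y*x) + (x*y + y*x)*x = (x*x*y + y*(x*x)) + (x*y*x + x*y*x) := by
      noncomm_ring
    have e7 : δ (x*y*x + x*y*x) = 2 * δ (x*y*x) := by rw [map_add, two_mul]
    rw [e4, map_add, e7, h1 (x*x) y, h1 x y, hδ x] at e1
    have key : 2 * (δ (x*y*x) - (δ x * (y*x) + x * δ y * x + x*y*δ x)) = 0 := by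
      linear_combination (norm := noncomm_ring) e1
    have := htf _ key
    linear_combination (norm := noncomm_ring) this
  intro a b
  -- δ(ba) in terms of δ(ab)
  have hba : δ (b*a) = δ a * b + a * δ b + δ b * a + b * δ a - δ (a*b) := by
    have e := h1 a b
    rw [map_add] at e
    linear_combination (norm := noncomm_ring) e
  -- compute δ(abab + baba) two ways
  have e5 := h1 a (b*a*b)
  have e6 : a*(b*a*b) + (b*a*b)*a = (a*b)*(a*b) + (b*a)*(b*a) := by noncomm_ring
  rw [e6, map_add, hδ (a*b), hδ (b*a), h2 b a, hba] at e5
  linear_combination (norm := noncomm_ring) e5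
end

section
/- Let M be a von Neumann algebra and p, q projections in M. Then p − p ∧ q is Murray–von Neumann equivalent to p ∨ q − q (the Kaplansky parallelogram law). -/
open scoped InnerProductSpace

noncomputable section ParallelogramAux

variable {H : Type*} [NormedAddCommGroup H] [InnerProductSpace ℂ H] [CompleteSpace H]

private lemma isClosed_setCentralizer (T : Set (H →L[ℂ] H)) :
    IsClosed (Set.centralizer T) := by
  have h : Set.centralizer T = ⋂ t ∈ T, {x : H →L[ℂ] H | t * x = x * t} := by
    ext x
    simp only [Set.mem_centralizer_iff, Set.mem_iInter, Set.mem_setOf_eq]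
  rw [h]
  exact isClosed_biInter fun t _ =>
    isClosed_eq (continuous_mul_left t) (continuous_mul_right t)

set_option maxHeartbeats 1000000 in
private theorem polar_aux (z : H →L[ℂ] H) :
    ∃ u : H →L[ℂ] H,
      u * (star u * u) = u ∧
      z * (star u * u) = z ∧
      (∀ r : H →L[ℂ] H, z * r = 0 → (star u * u) * r = 0) ∧
      (∀ w : H →L[ℂ] H, w * (star z * z) = star z * z → w * (star u * u) = star u * u) ∧
      (u * star u) * z = z ∧
      (∀ r : H →L[ℂ] H, r * z = 0 → r * (u * star u) = 0) ∧
      (∀ w : H →L[ℂ] H, w * z = z → w * (u * star u) = u * star u) ∧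
      (∀ y : H →L[ℂ] H, y * z = z * y → y * star z = star z * y → y * u = u * y) := by
  classical
  have happ : ∀ {T S : H →L[ℂ] H}, T = S → ∀ v : H, T v = S v := by
    intro T S h v; rw [h]
  set a : H →L[ℂ] H := star z * z with ha_def
  have ha : IsSelfAdjoint a := IsSelfAdjoint.star_mul_self z
  have ha' : IsStarNormal a := ha.isStarNormal
  have ha_nonneg : (0 : H →L[ℂ] H) ≤ a := star_mul_self_nonneg z
  set g : ℂ → ℂ := fun x => (Real.sqrt x.re : ℂ) with hg_def
  have hg_cont : Continuous g := by fun_prop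
  set s : H →L[ℂ] H := cfc g a with hs_def
  have hspec : ∀ x ∈ spectrum ℂ a, x = (x.re : ℂ) ∧ 0 ≤ x.re := by
    intro x hx
    have hre := ha.mem_spectrum_eq_re hx
    refine ⟨hre, ?_⟩
    have hmem : (x.re : ℝ) ∈ spectrum ℝ a := by
      rw [← spectrum.algebraMap_mem_iff ℂ]
      simpa [← hre] using hx
    exact spectrum_nonneg_of_nonneg ha_nonneg hmem
  have hs_star : star s = s := by
    rw [hs_def, ← cfc_star]
    exact cfc_congr fun x _ => by
      simp [hg_def, Complex.conj_ofReal]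
  have hs_sq : s * s = a := by
    rw [hs_def, ← cfc_mul g g a (by fun_prop) (by fun_prop)]
    calc cfc (fun x => g x * g x) a = cfc (id : ℂ → ℂ) a := by
          refine cfc_congr fun x hx => ?_
          obtain ⟨hre, hnn⟩ := hspec x hx
          simp only [hg_def, id, ← Complex.ofReal_mul, Real.mul_self_sqrt hnn]
          exact hre.symm
      _ = a := cfc_id ℂ a
  -- inner product identities
  have hadj_s : ∀ v w : H, ⟪s v, w⟫_ℂ = ⟪v, s w⟫_ℂ := by
    intro v w
    conv_lhs => rw [← hs_star, ContinuousLinearMap.star_eq_adjoint]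
    exact ContinuousLinearMap.adjoint_inner_left s w v
  have hss_apply : ∀ x : H, s (s x) = a x := fun x => happ hs_sq x
  have hinner_a : ∀ x : H, ⟪x, a x⟫_ℂ = ⟪z x, z x⟫_ℂ := by
    intro x
    rw [ha_def]
    calc ⟪x, (star z * z) x⟫_ℂ = ⟪x, (ContinuousLinearMap.adjoint z) (z x)⟫_ℂ := by
          rw [ContinuousLinearMap.mul_apply, ContinuousLinearMap.star_eq_adjoint]
      _ = ⟪z x, z x⟫_ℂ := ContinuousLinearMap.adjoint_inner_right z x (z x)
  have hnorm : ∀ x : H, ‖s x‖ = ‖z x‖ := by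
    intro x
    have h2 : ‖s x‖ ^ 2 = ‖z x‖ ^ 2 := by
      rw [← inner_self_eq_norm_sq (𝕜 := ℂ) (s x), ← inner_self_eq_norm_sq (𝕜 := ℂ) (z x)]
      congr 1
      rw [hadj_s x (s x), hss_apply x, hinner_a x]
    nlinarith [norm_nonneg (s x), norm_nonneg (z x)]
  -- membership of s in the elemental star algebra of a
  have hs_mem : s ∈ StarAlgebra.elemental ℂ a := by
    rw [hs_def, cfc_apply g a ha' (Continuous.continuousOn hg_cont),
      cfcHom_eq_of_isStarNormal]
    exact SetLike.coe_mem _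
  -- the spaces
  set sl : H →ₗ[ℂ] H := (s : H →ₗ[ℂ] H) with hsl_def
  set R : Submodule ℂ H := LinearMap.range sl with hR_def
  set K : Submodule ℂ H := R.topologicalClosure with hK_def
  haveI : CompleteSpace K := by exact R.isClosed_topologicalClosure.completeSpace_coe
  have hmemR : ∀ x : H, s x ∈ R := fun x => LinearMap.mem_range_self sl x
  have hmemK : ∀ x : H, s x ∈ K := fun x => R.le_topologicalClosure (hmemR x)
  have hker : LinearMap.ker sl ≤ LinearMap.ker (z : H →ₗ[ℂ] H) := by
    intro x hx
    have hx0 : s x = 0 := hx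
    have : ‖z x‖ = 0 := by rw [← hnorm, hx0, norm_zero]
    simpa using norm_eq_zero.mp this
  set f₀ : R →ₗ[ℂ] H :=
    ((LinearMap.ker sl).liftQ (z : H →ₗ[ℂ] H) hker).comp
      (LinearMap.quotKerEquivRange sl).symm.toLinearMap with hf₀_def
  have hf₀_apply : ∀ x : H, f₀ ⟨s x, hmemR x⟩ = z x := by
    intro x
    have h1 : (LinearMap.quotKerEquivRange sl) (Submodule.Quotient.mk x)
        = ⟨s x, hmemR x⟩ :=
      Subtype.ext (LinearMap.quotKerEquivRange_apply_mk sl x)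
    have h2 : (LinearMap.quotKerEquivRange sl).symm ⟨s x, hmemR x⟩
        = Submodule.Quotient.mk x := (LinearEquiv.symm_apply_eq _).mpr h1.symm
    rw [hf₀_def]
    simp only [LinearMap.comp_apply, LinearEquiv.coe_toLinearMap, h2, Submodule.liftQ_apply]
    rfl
  have hf₀_norm : ∀ v : R, ‖f₀ v‖ = ‖v‖ := by
    rintro ⟨v, hv⟩
    obtain ⟨x, rfl⟩ := hv
    have hfx : f₀ ⟨sl x, ⟨x, rfl⟩⟩ = z x := hf₀_apply x
    rw [hfx]
    exact (hnorm x).symm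
  set f : R →L[ℂ] H := LinearMap.mkContinuous f₀ 1
    (fun v => by rw [hf₀_norm, one_mul]) with hf_def
  have hf_apply : ∀ x : H, f ⟨s x, hmemR x⟩ = z x := fun x => hf₀_apply x
  have hf_norm : ∀ v : R, ‖f v‖ = ‖v‖ := fun v => hf₀_norm v
  set e : R →L[ℂ] K := LinearMap.mkContinuous (Submodule.inclusion R.le_topologicalClosure) 1
    (fun v => by rw [one_mul]; rfl) with he_def
  have he_apply : ∀ v : R, ((e v : H)) = (v : H) := fun v => rfl
  have he_norm : ∀ v : R, ‖e v‖ = ‖v‖ := fun v => rfl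
  have he_iso : Isometry e := AddMonoidHomClass.isometry_of_norm e he_norm
  have h_ui : IsUniformInducing (⇑e) := he_iso.isUniformInducing
  have h_dense : DenseRange (⇑e) := by
    refine Topology.IsInducing.subtypeVal.dense_iff.2 fun k => ?_
    have hk : (k : H) ∈ closure (R : Set H) := by
      exact k.2
    convert hk using 2
    rw [← Set.range_comp]
    ext w
    constructor
    · rintro ⟨v, rfl⟩; exact v.2
    · intro hw; exact ⟨⟨w, hw⟩, rfl⟩
  set ub : K →L[ℂ] H := f.extend e with hub_def
  have hub : ∀ v : R, ub (e v) = f v := fun v =>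
    ContinuousLinearMap.extend_eq f h_dense h_ui v
  set P : H →L[ℂ] K := K.orthogonalProjectionOnto with hP_def
  set u : H →L[ℂ] H := ub.comp P with hu_def
  have hu_apply : ∀ x : H, u x = ub (P x) := fun x => rfl
  have hPK : ∀ k : K, P (k : H) = k := fun k => Submodule.orthogonalProjectionOnto_mem_subspace_eq_self k
  have huK : ∀ k : K, u (k : H) = ub k := by
    intro k; rw [hu_apply, hPK]
  have hu_s : ∀ x : H, u (s x) = z x := by
    intro x
    have h1 : (⟨s x, hmemK x⟩ : K) = e ⟨s x, hmemR x⟩ := rfl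
    calc u (s x) = ub ⟨s x, hmemK x⟩ := huK ⟨s x, hmemK x⟩
      _ = ub (e ⟨s x, hmemR x⟩) := by rw [h1]
      _ = f ⟨s x, hmemR x⟩ := hub _
      _ = z x := hf_apply x
  have hub_norm : ∀ k : K, ‖ub k‖ = ‖k‖ := by
    intro k
    refine DenseRange.induction_on h_dense k ?_ ?_
    · exact isClosed_eq (continuous_norm.comp ub.continuous) continuous_norm
    · intro v; rw [hub v, hf_norm v, he_norm v]
  set isom : K →ₗᵢ[ℂ] H := ⟨ub.toLinearMap, hub_norm⟩ with hisom_def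
  have hinner_ub : ∀ k k' : K, ⟪ub k, ub k'⟫_ℂ = ⟪(k : H), (k' : H)⟫_ℂ := by
    intro k k'
    have := isom.inner_map_map k k'
    simpa [hisom_def, Submodule.coe_inner] using this
  -- the projection EP
  set EP : H →L[ℂ] H := K.subtypeL.comp P with hEP_def
  have hEP_apply : ∀ x : H, EP x = ((P x : H)) := fun x => rfl
  have hE_inner : ∀ x y : H, ⟪(star u * u) x, y⟫_ℂ = ⟪EP x, y⟫_ℂ := by
    intro x y
    rw [ContinuousLinearMap.mul_apply, ContinuousLinearMap.star_eq_adjoint,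
      ContinuousLinearMap.adjoint_inner_left]
    have h1 : ⟪u x, u y⟫_ℂ = ⟪((P x : H)), ((P y : H))⟫_ℂ := by
      rw [hu_apply x, hu_apply y]; exact hinner_ub (P x) (P y)
    have h2 : ⟪((P x : H)), y - ((P y : H))⟫_ℂ = 0 :=
      (Submodule.mem_orthogonal _ _).1 (K.sub_starProjection_mem_orthogonal y) _ (P x).2
    have h3 : ⟪((P x : H)), y⟫_ℂ = ⟪((P x : H)), ((P y : H))⟫_ℂ := by
      have := inner_sub_right (𝕜 := ℂ) ((P x : H)) y ((P y : H))
      rw [h2] at this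
      exact sub_eq_zero.mp this.symm
    rw [h1, hEP_apply, h3]
  have hE_eq : star u * u = EP := by
    ext x
    exact ext_inner_right ℂ fun y => hE_inner x y
  have hEfixK : ∀ k : H, k ∈ K → EP k = k := by
    intro k hk
    rw [hEP_apply]
    have : P k = ⟨k, hk⟩ := hPK ⟨k, hk⟩
    rw [this]
  have hEperp : ∀ v : H, v ∈ Kᗮ → EP v = 0 := by
    intro v hv
    rw [hEP_apply, Submodule.orthogonalProjectionOnto_apply_of_mem_orthogonal hv]
    rfl
  have hu_EP : u.comp EP = u := by
    ext x
    show u ((P x : H)) = u x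
    rw [huK (P x), hu_apply]
  -- (1)
  have prop1 : u * (star u * u) = u := by rw [hE_eq]; exact hu_EP
  -- (2)
  have hEPs : EP * s = s := by
    ext x; exact hEfixK (s x) (hmemK x)
  have hEP_sa : star EP = EP := by rw [← hE_eq]; simp [star_mul]
  have hsEP : s * EP = s := by
    have := congrArg star hEPs
    rwa [star_mul, hEP_sa, hs_star] at this
  have hus : u * s = z := by ext x; exact hu_s x
  have prop2 : z * (star u * u) = z := by
    rw [hE_eq, ← hus, mul_assoc, hsEP]
  -- (3)
  have prop3 : ∀ r : H →L[ℂ] H, z * r = 0 → (star u * u) * r = 0 := by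
    intro r hr
    rw [hE_eq]
    ext x
    have hzr : z (r x) = 0 := happ hr x
    have hsr : s (r x) = 0 := by
      have : ‖s (r x)‖ = 0 := by rw [hnorm, hzr, norm_zero]
      simpa using norm_eq_zero.mp this
    have hperp : r x ∈ Kᗮ := by
      have hR : r x ∈ Rᗮ := by
        rw [Submodule.mem_orthogonal]
        rintro w ⟨x', rfl⟩
        rw [show sl x' = s x' from rfl, hadj_s, hsr, inner_zero_right]
      rw [Submodule.mem_orthogonal]
      intro w hw
      have hcl : (K : Set H) ⊆ {w : H | ⟪w, r x⟫_ℂ = 0} := by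
        have : IsClosed {w : H | ⟪w, r x⟫_ℂ = 0} :=
          isClosed_eq (Continuous.inner continuous_id continuous_const) continuous_const
        rw [hK_def, Submodule.topologicalClosure_coe]
        refine closure_minimal ?_ this
        intro w hw
        exact (Submodule.mem_orthogonal _ _).1 hR w hw
      exact hcl hw
    show EP (r x) = (0 : H →L[ℂ] H) x
    rw [hEperp _ hperp]; rfl
  -- (4)
  have hsx_mem_cl : ∀ x : H,
      s x ∈ closure ((LinearMap.range ((a : H →L[ℂ] H) : H →ₗ[ℂ] H) : Submodule ℂ H) : Set H) := by
    intro x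
    set Ra : Submodule ℂ H := LinearMap.range ((a : H →L[ℂ] H) : H →ₗ[ℂ] H) with hRa_def
    have h1 : s x ∈ Raᗮᗮ := by
      rw [Submodule.mem_orthogonal]
      intro v hv
      have hav : ⟪a v, v⟫_ℂ = 0 :=
        (Submodule.mem_orthogonal _ _).1 hv (a v) (LinearMap.mem_range_self _ v)
      have hva : ⟪v, a v⟫_ℂ = 0 := by
        rw [← inner_conj_symm, hav, map_zero]
      have hzv : z v = 0 := by
        have h0 : ⟪z v, z v⟫_ℂ = 0 := by rw [← hinner_a v, hva]
        simpa using inner_self_eq_zero.mp h0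
      have hsv : s v = 0 := by
        have : ‖s v‖ = 0 := by rw [hnorm, hzv, norm_zero]
        simpa using norm_eq_zero.mp this
      rw [← hadj_s v x, hsv, inner_zero_left]
    rw [Submodule.orthogonal_orthogonal_eq_closure] at h1
    rw [← Submodule.topologicalClosure_coe]
    exact h1
  have prop4 : ∀ w : H →L[ℂ] H, w * (star z * z) = star z * z →
      w * (star u * u) = star u * u := by
    intro w hw
    rw [hE_eq]
    ext x
    show w (EP x) = EP x
    have hC : IsClosed {v : H | w v = v} := isClosed_eq w.continuous continuous_id
    have hfix_a : ∀ v : H, w (a v) = a v := by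
      intro v
      exact happ hw v
    have hfix_s : ∀ x' : H, w (s x') = s x' := by
      intro x'
      have h1 : ((LinearMap.range ((a : H →L[ℂ] H) : H →ₗ[ℂ] H) : Submodule ℂ H) : Set H)
          ⊆ {v : H | w v = v} := by
        rintro _ ⟨v, rfl⟩; exact hfix_a v
      exact closure_minimal h1 hC (hsx_mem_cl x')
    have hfixK : ∀ k : H, k ∈ K → w k = k := by
      intro k hk
      have h1 : (R : Set H) ⊆ {v : H | w v = v} := by
        rintro _ ⟨x', rfl⟩; exact hfix_s x'
      have : (K : Set H) ⊆ {v : H | w v = v} := by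
        rw [hK_def, Submodule.topologicalClosure_coe]
        exact closure_minimal h1 hC
      exact this hk
    exact hfixK _ (P x).2
  -- (5)
  have prop5 : (u * star u) * z = z := by
    have h1 : (u * star u) * z = u * ((star u * u) * s) := by
      rw [← hus]; simp only [mul_assoc]
    rw [h1, hE_eq, hEPs]
    exact hus
  -- (6)
  have hub_dense_zero : ∀ (r : H →L[ℂ] H), r * z = 0 → ∀ k : K, r (ub k) = 0 := by
    intro r hr k
    refine DenseRange.induction_on h_dense k ?_ ?_
    · exact isClosed_eq (r.continuous.comp ub.continuous) continuous_const
    · rintro ⟨v, hv⟩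
      obtain ⟨x, rfl⟩ := hv
      have hfx : f ⟨sl x, ⟨x, rfl⟩⟩ = z x := hf_apply x
      rw [hub, hfx]
      exact happ hr x
  have prop6 : ∀ r : H →L[ℂ] H, r * z = 0 → r * (u * star u) = 0 := by
    intro r hr
    ext x
    show r (u ((star u) x)) = (0 : H →L[ℂ] H) x
    rw [hu_apply, hub_dense_zero r hr]
    rfl
  -- (7)
  have prop7 : ∀ w : H →L[ℂ] H, w * z = z → w * (u * star u) = u * star u := by
    intro w hw
    have hfix : ∀ k : K, w (ub k) = ub k := by
      intro k
      refine DenseRange.induction_on h_dense k ?_ ?_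
      · exact isClosed_eq (w.continuous.comp ub.continuous) ub.continuous
      · rintro ⟨v, hv⟩
        obtain ⟨x, rfl⟩ := hv
        have hfx : f ⟨sl x, ⟨x, rfl⟩⟩ = z x := hf_apply x
        rw [hub, hfx]
        exact happ hw x
    ext x
    show w (u ((star u) x)) = u ((star u) x)
    rw [hu_apply, hfix]
  -- (8)
  have prop8 : ∀ y : H →L[ℂ] H, y * z = z * y → y * star z = star z * y →
      y * u = u * y := by
    intro y hyz hyzs
    have hya : y * a = a * y := by
      rw [ha_def]
      calc y * (star z * z) = (y * star z) * z := (mul_assoc _ _ _).symm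
        _ = (star z * y) * z := by rw [hyzs]
        _ = star z * (y * z) := mul_assoc _ _ _
        _ = star z * (z * y) := by rw [hyz]
        _ = (star z * z) * y := (mul_assoc _ _ _).symm
    -- y commutes with s
    have hsy : y * s = s * y := by
      have hCy_closed : IsClosed ((StarSubalgebra.centralizer ℂ {y} :
          StarSubalgebra ℂ (H →L[ℂ] H)) : Set (H →L[ℂ] H)) := by
        rw [StarSubalgebra.coe_centralizer]
        exact isClosed_setCentralizer _
      have haCy : a ∈ StarSubalgebra.centralizer ℂ {y} := by
        rw [StarSubalgebra.mem_centralizer_iff]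
        intro g hg
        rw [Set.mem_singleton_iff] at hg
        rw [hg]
        refine ⟨hya, ?_⟩
        exact (by simpa [star_mul, ha.star_eq] using congrArg star hya : a * star y = star y * a).symm
      have hs_in := StarAlgebra.elemental.le_of_mem hCy_closed haCy hs_mem
      rw [StarSubalgebra.mem_centralizer_iff] at hs_in
      exact (hs_in y rfl).1
    have hsy_ap : ∀ x : H, y (s x) = s (y x) := by
      intro x
      exact happ hsy x
    have hysy : star y * s = s * star y := by
      have := congrArg star hsy
      rw [star_mul, star_mul, hs_star] at this
      exact this.symm
    have hysy_ap : ∀ x : H, (star y) (s x) = s ((star y) x) := by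
      intro x
      exact happ hysy x
    have hKinv : ∀ k : H, k ∈ K → (star y) k ∈ K := by
      intro k hk
      have hclosed : IsClosed (⇑(star y) ⁻¹' (K : Set H)) :=
        R.isClosed_topologicalClosure.preimage (star y).continuous
      have hsub : (R : Set H) ⊆ ⇑(star y) ⁻¹' (K : Set H) := by
        rintro _ ⟨x, rfl⟩
        show (star y) (s x) ∈ K
        rw [hysy_ap]
        exact hmemK _
      have h1 : (K : Set H) ⊆ ⇑(star y) ⁻¹' (K : Set H) := by
        rw [hK_def, Submodule.topologicalClosure_coe]
        exact closure_minimal hsub hclosed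
      exact h1 hk
    have hKperp : ∀ v : H, v ∈ Kᗮ → y v ∈ Kᗮ := by
      intro v hv
      rw [Submodule.mem_orthogonal]
      intro k hk
      have h1 : ⟪k, y v⟫_ℂ = ⟪(star y) k, v⟫_ℂ := by
        rw [ContinuousLinearMap.star_eq_adjoint]
        exact (ContinuousLinearMap.adjoint_inner_left y v k).symm
      rw [h1]
      exact (Submodule.mem_orthogonal _ _).1 hv _ (hKinv k hk)
    have hyub : ∀ k : K, y (ub k) = u (y (k : H)) := by
      intro k
      refine DenseRange.induction_on h_dense k ?_ ?_
      · exact isClosed_eq (y.continuous.comp ub.continuous)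
          (u.continuous.comp (y.continuous.comp continuous_subtype_val))
      · rintro ⟨v, hv⟩
        obtain ⟨x, rfl⟩ := hv
        have hfx : f ⟨sl x, ⟨x, rfl⟩⟩ = z x := hf_apply x
        rw [hub, hfx]
        show y (z x) = u (y (s x))
        rw [hsy_ap, hu_s]
        exact happ hyz x
    ext x
    show y (u x) = u (y x)
    have hdecomp : y x = y ((P x : H)) + y (x - (P x : H)) := by
      rw [← map_add]
      congr 1
      abel
    have hperp_zero : u (y (x - (P x : H))) = 0 := by
      have h1 : y (x - (P x : H)) ∈ Kᗮ :=
        hKperp _ (K.sub_starProjection_mem_orthogonal x)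
      rw [hu_apply, Submodule.orthogonalProjectionOnto_apply_of_mem_orthogonal h1]
      exact map_zero ub
    calc y (u x) = y (ub (P x)) := by rw [hu_apply]
      _ = u (y ((P x : H))) := hyub (P x)
      _ = u (y ((P x : H))) + u (y (x - (P x : H))) := by rw [hperp_zero, add_zero]
      _ = u (y x) := by rw [← map_add, ← hdecomp]
  exact ⟨u, prop1, prop2, prop3, prop4, prop5, prop6, prop7, prop8⟩

end ParallelogramAux
/-- Kaplansky's parallelogram law: for projections `p, q` in a von Neumann algebra
`M`, the projection `p − p ∧ q` is Murray–von Neumann equivalent (via a partial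
isometry in `M`) to `p ∨ q − q`.  Here `m` is the meet and `j` the join of `p` and
`q` in the projection lattice of `M`, characterized by the order `e ≤ f ↔ f e = e`. -/
theorem parallelogram_law_murray_von_neumann
    {H : Type*} [NormedAddCommGroup H] [InnerProductSpace ℂ H] [CompleteSpace H]
    (M : VonNeumannAlgebra H) (p q m j : H →L[ℂ] H)
    (hpM : p ∈ M) (hqM : q ∈ M) (hmM : m ∈ M) (hjM : j ∈ M)
    (hp : p * p = p ∧ star p = p) (hq : q * q = q ∧ star q = q)
    (hm : m * m = m ∧ star m = m) (hj : j * j = j ∧ star j = j)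
    -- `m` is the greatest lower bound of `p` and `q` among projections of `M`
    (hm_le : p * m = m ∧ q * m = m)
    (hm_glb : ∀ r : H →L[ℂ] H, r ∈ M → r * r = r → star r = r →
      p * r = r → q * r = r → m * r = r)
    -- `j` is the least upper bound of `p` and `q` among projections of `M`
    (hj_ge : j * p = p ∧ j * q = q)
    (hj_lub : ∀ r : H →L[ℂ] H, r ∈ M → r * r = r → star r = r →
      r * p = p → r * q = q → r * j = j) :
    ∃ u ∈ M, star u * u = p - m ∧ u * star u = j - q := by
  set z : H →L[ℂ] H := p - q * p with hz_def
  have hzM : z ∈ M := sub_mem hpM (mul_mem hqM hpM)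
  have hzstar : star z = p - p * q := by
    rw [hz_def, star_sub, star_mul, hp.2, hq.2]
  obtain ⟨u, h1, h2, h3, h4, h5, h6, h7, h8⟩ := polar_aux z
  -- u belongs to M
  have huM : u ∈ M := by
    have hcc : Set.centralizer (Set.centralizer (M : Set (H →L[ℂ] H))) = M :=
      M.centralizer_centralizer
    rw [← SetLike.mem_coe, ← hcc]
    intro y hy
    have hyz : y * z = z * y := (hy z hzM).symm
    have hyzs : y * star z = star z * y := (hy (star z) (star_mem hzM)).symm
    exact h8 y hyz hyzs
  set E : H →L[ℂ] H := star u * u with hE_def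
  set G : H →L[ℂ] H := u * star u with hG_def
  have hEM : E ∈ M := mul_mem (star_mem huM) huM
  have hGM : G ∈ M := mul_mem huM (star_mem huM)
  have hE_sa : star E = E := by rw [hE_def]; simp [star_mul, star_star]
  have hG_sa : star G = G := by rw [hG_def]; simp [star_mul, star_star]
  have hEE : E * E = E := by
    rw [hE_def]
    calc (star u * u) * (star u * u) = star u * (u * (star u * u)) := by
          simp only [mul_assoc]
      _ = star u * u := by rw [h1]
  have h1' : (star u * u) * star u = star u := by
    have := congrArg star h1
    rwa [star_mul, star_mul, star_star] at this
  have hGG : G * G = G := by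
    rw [hG_def]
    calc (u * star u) * (u * star u) = u * ((star u * u) * star u) := by
          simp only [mul_assoc]
      _ = u * star u := by rw [h1']
  -- E = p - m
  have hpzs : p * star z = star z := by
    rw [hzstar, mul_sub, ← mul_assoc, hp.1]
  have hpa : p * (star z * z) = star z * z := by
    rw [← mul_assoc, hpzs]
  have hEp' : p * E = E := by rw [hE_def]; exact h4 p hpa
  have hpE : E * p = E := by
    have := congrArg star hEp'
    rwa [star_mul, hE_sa, hp.2] at this
  have hzE : z * E = z := by rw [hE_def]; exact h2
  have hzm : z * m = 0 := by
    rw [hz_def, sub_mul, mul_assoc, hm_le.1, hm_le.2, sub_self]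
  have hEm : E * m = 0 := by rw [hE_def]; exact h3 m hzm
  set t : H →L[ℂ] H := p - E with ht_def
  have ht_sa : star t = t := by rw [ht_def, star_sub, hp.2, hE_sa]
  have htt : t * t = t := by
    rw [ht_def]
    rw [sub_mul, mul_sub, mul_sub, hp.1, hEp', hpE, hEE]
    abel
  have htM : t ∈ M := sub_mem hpM hEM
  have hpt : p * t = t := by rw [ht_def, mul_sub, hp.1, hEp']
  have hqE : q * E = E - z := by
    have h9 : E - q * E = z := by
      calc E - q * E = p * E - q * (p * E) := by rw [hEp']
        _ = (p - q * p) * E := by rw [sub_mul, mul_assoc]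
        _ = z := by rw [← hz_def, hzE]
    have : q * E = E - (E - q * E) := by abel
    rw [this, h9]
  have hqt : q * t = t := by
    rw [ht_def, mul_sub, hqE, hz_def]
    abel
  have hmt : m * t = t := hm_glb t htM htt ht_sa hpt hqt
  have htm : t * m = m := by rw [ht_def, sub_mul, hm_le.1, hEm, sub_zero]
  have hmt' : m * t = m := by
    have := congrArg star htm
    rwa [star_mul, hm.2, ht_sa] at this
  have htm_eq : t = m := by rw [← hmt, hmt']
  have hE_val : E = p - m := by
    rw [← htm_eq, ht_def]
    abel
  -- G = j - q
  have hqz : q * z = 0 := by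
    rw [hz_def, mul_sub, ← mul_assoc, hq.1, sub_self]
  have hqG : q * G = 0 := by rw [hG_def]; exact h6 q hqz
  have hGq : G * q = 0 := by
    have := congrArg star hqG
    rwa [star_mul, hG_sa, hq.2, star_zero] at this
  have hGz : G * z = z := by rw [hG_def]; exact h5
  have hGp : G * p = z := by
    have hp_decomp : p = q * p + z := by rw [hz_def]; abel
    calc G * p = G * (q * p + z) := by rw [← hp_decomp]
      _ = (G * q) * p + G * z := by rw [mul_add, ← mul_assoc]
      _ = z := by rw [hGq, hGz, zero_mul, zero_add]
  set w : H →L[ℂ] H := q + G with hw_def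
  have hw_sa : star w = w := by rw [hw_def, star_add, hq.2, hG_sa]
  have hwM : w ∈ M := add_mem hqM hGM
  have hww : w * w = w := by
    rw [hw_def, add_mul, mul_add, mul_add, hq.1, hqG, hGq, hGG]
    abel
  have hwp : w * p = p := by
    rw [hw_def, add_mul, hGp, hz_def]
    abel
  have hwq : w * q = q := by rw [hw_def, add_mul, hq.1, hGq, add_zero]
  have hwj : w * j = j := hj_lub w hwM hww hw_sa hwp hwq
  have hjz : j * z = z := by
    rw [hz_def, mul_sub, hj_ge.1, ← mul_assoc, hj_ge.2]
  have hjG : j * G = G := by rw [hG_def]; exact h7 j hjz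
  have hjw : j * w = w := by rw [hw_def, mul_add, hj_ge.2, hjG]
  have hjw' : j * w = j := by
    have := congrArg star hwj
    rwa [star_mul, hw_sa, hj.2] at this
  have hw_eq : w = j := by rw [← hjw, hjw']
  have hG_val : G = j - q := by
    rw [← hw_eq, hw_def]
    abel
  exact ⟨u, huM, hE_val, hG_val⟩
end
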